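/- arXiv:2302.08424 — 5 statements merged into one kernel-verified Lean document; each statement's English description precedes it below -/
import Mathlib

section
/- For the newsvendor loss with parameters c_o, c_u > 0 normalized so c_o + c_u = 1 and q = c_u, for any distribution F on [0,1] with cdf F, the minimal expected loss satisfies min_{a∈[0,1]} L(a,F) = ∫₀¹ min{(1−q)·F(z), q·(1−F(z))} dz. -/
open MeasureTheory Set ProbabilityTheory Filter
open scoped ENNReal Topology

lemma aux1 (F : Measure ℝ) [IsProbabilityMeasure F] (hF : F (Icc (0:ℝ) 1)ᶜ = 0)
    (a : ℝ) :
    ∫⁻ y, ENNReal.ofReal (max (a - y) 0) ∂F = ∫⁻ z in Ioc (0:ℝ) a, F (Iio z) := by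
  have hφ0 : ∀ z : ℝ, z ≤ 0 → F (Iio z) = 0 := by
    intro z hz
    refine measure_mono_null (fun y hy => ?_) hF
    simp only [mem_compl_iff, mem_Icc, not_and_or, not_le]
    exact Or.inl (lt_of_lt_of_le hy hz)
  have h1 : ∀ y : ℝ, ENNReal.ofReal (max (a - y) 0) = volume (Ioc y a) := by
    intro y
    rw [Real.volume_Ioc]
    rcases le_total (a - y) 0 with h | h
    · rw [max_eq_right h, ENNReal.ofReal_zero, Eq.comm, ENNReal.ofReal_eq_zero]
      exact h
    · rw [max_eq_left h]
  have h2 : ∀ y : ℝ, volume (Ioc y a) = ∫⁻ z, (Ioc y a).indicator (1 : ℝ → ℝ≥0∞) z :=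
    fun y => (lintegral_indicator_one measurableSet_Ioc).symm
  simp_rw [h1, h2]
  rw [lintegral_lintegral_swap]
  · have h3 : ∀ z : ℝ, (∫⁻ y, (Ioc y a).indicator (1 : ℝ → ℝ≥0∞) z ∂F)
        = (Ioc 0 a).indicator (fun z => F (Iio z)) z := by
      intro z
      by_cases hza : z ≤ a
      · have : (fun y => (Ioc y a).indicator (1 : ℝ → ℝ≥0∞) z)
            = fun y => (Iio z).indicator (1 : ℝ → ℝ≥0∞) y := by
          funext y
          simp [Set.indicator_apply, Set.mem_Ioc, Set.mem_Iio, hza]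
        rw [this, lintegral_indicator_one measurableSet_Iio]
        by_cases h0 : 0 < z
        · simp [Set.indicator_apply, Set.mem_Ioc, hza, h0]
        · simp [Set.indicator_apply, Set.mem_Ioc, h0, hφ0 z (not_lt.mp h0)]
      · simp [Set.indicator_apply, Set.mem_Ioc, hza]
    simp_rw [h3]
    rw [lintegral_indicator measurableSet_Ioc]
  · have : Function.uncurry (fun y z => (Ioc y a).indicator (1 : ℝ → ℝ≥0∞) z)
        = ({p : ℝ × ℝ | p.1 < p.2 ∧ p.2 ≤ a}).indicator (1 : ℝ × ℝ → ℝ≥0∞) := by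
      funext p
      simp [Function.uncurry, Set.indicator_apply, Set.mem_Ioc]
    rw [this]
    exact (Measurable.indicator measurable_const
      ((measurableSet_lt measurable_fst measurable_snd).inter
        (measurableSet_le measurable_snd measurable_const))).aemeasurable

lemma aux2 (F : Measure ℝ) [IsProbabilityMeasure F] (hF : F (Icc (0:ℝ) 1)ᶜ = 0)
    (a : ℝ) :
    ∫⁻ y, ENNReal.ofReal (max (y - a) 0) ∂F = ∫⁻ z in Ioc a (1:ℝ), F (Ici z) := by
  have hψ0 : ∀ z : ℝ, 1 < z → F (Ici z) = 0 := by
    intro z hz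
    refine measure_mono_null (fun y hy => ?_) hF
    simp only [mem_compl_iff, mem_Icc, not_and_or, not_le]
    exact Or.inr (lt_of_lt_of_le hz hy)
  have h1 : ∀ y : ℝ, ENNReal.ofReal (max (y - a) 0) = volume (Ioc a y) := by
    intro y
    rw [Real.volume_Ioc]
    rcases le_total (y - a) 0 with h | h
    · rw [max_eq_right h, ENNReal.ofReal_zero, Eq.comm, ENNReal.ofReal_eq_zero]
      exact h
    · rw [max_eq_left h]
  have h2 : ∀ y : ℝ, volume (Ioc a y) = ∫⁻ z, (Ioc a y).indicator (1 : ℝ → ℝ≥0∞) z :=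
    fun y => (lintegral_indicator_one measurableSet_Ioc).symm
  simp_rw [h1, h2]
  rw [lintegral_lintegral_swap]
  · have h3 : ∀ z : ℝ, (∫⁻ y, (Ioc a y).indicator (1 : ℝ → ℝ≥0∞) z ∂F)
        = (Ioc a 1).indicator (fun z => F (Ici z)) z := by
      intro z
      by_cases hza : a < z
      · have : (fun y => (Ioc a y).indicator (1 : ℝ → ℝ≥0∞) z)
            = fun y => (Ici z).indicator (1 : ℝ → ℝ≥0∞) y := by
          funext y
          simp [Set.indicator_apply, Set.mem_Ioc, Set.mem_Ici, hza]
        rw [this, lintegral_indicator_one measurableSet_Ici]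
        by_cases h1' : z ≤ 1
        · simp [Set.indicator_apply, Set.mem_Ioc, hza, h1']
        · simp [Set.indicator_apply, Set.mem_Ioc, h1', hψ0 z (not_le.mp h1')]
      · simp [Set.indicator_apply, Set.mem_Ioc, hza]
    simp_rw [h3]
    rw [lintegral_indicator measurableSet_Ioc]
  · have : Function.uncurry (fun y z => (Ioc a y).indicator (1 : ℝ → ℝ≥0∞) z)
        = ({p : ℝ × ℝ | a < p.2 ∧ p.2 ≤ p.1}).indicator (1 : ℝ × ℝ → ℝ≥0∞) := by
      funext p
      simp [Function.uncurry, Set.indicator_apply, Set.mem_Ioc]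
    rw [this]
    exact (Measurable.indicator measurable_const
      ((measurableSet_lt measurable_const measurable_snd).inter
        (measurableSet_le measurable_snd measurable_fst))).aemeasurable

lemma keyL (co cu : ℝ) (hco : 0 < co) (hcu : 0 < cu)
    (F : Measure ℝ) [IsProbabilityMeasure F] (hF : F (Icc (0:ℝ) 1)ᶜ = 0)
    (a : ℝ) :
    ∫ y, (co * max (a - y) 0 + cu * max (y - a) 0) ∂F
      = co * (∫ z in Ioc (0:ℝ) a, cdf F z) + cu * ∫ z in Ioc a (1:ℝ), (1 - cdf F z) := by
  -- measurability of the monotone functions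
  have hmIio : Measurable fun z : ℝ => F (Iio z) :=
    Monotone.measurable (fun x y hxy => measure_mono (Iio_subset_Iio hxy))
  have hmIci : Measurable fun z : ℝ => F (Ici z) :=
    Antitone.measurable (fun x y hxy => measure_mono (Ici_subset_Ici.mpr hxy))
  -- a.e. identities (atoms are countable)
  have hcount : Set.Countable {z : ℝ | F {z} ≠ 0} := by
    have := Measure.countable_meas_level_set_pos (μ := F) (g := id) measurable_id
    refine this.mono (fun z hz => ?_)
    simp only [mem_setOf_eq] at hz ⊢
    have : {a : ℝ | id a = z} = {z} := by ext; simp [eq_comm]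
    rw [this]
    exact pos_iff_ne_zero.mpr hz
  have haeNe : ∀ᵐ z : ℝ ∂volume, F {z} = 0 := by
    rw [ae_iff]
    exact measure_mono_null (fun z hz => hz) (hcount.measure_zero volume)
  have hA : ∀ᵐ z : ℝ ∂volume, (F (Iio z)).toReal = cdf F z := by
    filter_upwards [haeNe] with z hz
    have : F (Iic z) = F (Iio z) := by
      apply le_antisymm
      · rw [← Iio_union_right]
        calc F (Iio z ∪ {z}) ≤ F (Iio z) + F {z} := measure_union_le _ _
        _ = F (Iio z) := by rw [hz, add_zero]
      · exact measure_mono Iio_subset_Iic_self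
    rw [cdf_eq_real, measureReal_def, this]
  have hB : ∀ᵐ z : ℝ ∂volume, (F (Ici z)).toReal = 1 - cdf F z := by
    filter_upwards [hA] with z hz
    have hc : F (Ici z) = 1 - F (Iio z) := by
      rw [← compl_Iio, measure_compl measurableSet_Iio (measure_ne_top F _), measure_univ]
    rw [hc, ENNReal.toReal_sub_of_le prob_le_one ENNReal.one_ne_top, ENNReal.toReal_one, hz]
  -- finiteness of the two lintegrals
  have hXfin : ∫⁻ z in Ioc (0:ℝ) a, F (Iio z) ≠ ⊤ := by
    refine ne_top_of_le_ne_top ?_ (lintegral_mono (fun z => prob_le_one))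
    rw [setLIntegral_one]
    exact (measure_Ioc_lt_top).ne
  have hYfin : ∫⁻ z in Ioc a (1:ℝ), F (Ici z) ≠ ⊤ := by
    refine ne_top_of_le_ne_top ?_ (lintegral_mono (fun z => prob_le_one))
    rw [setLIntegral_one]
    exact (measure_Ioc_lt_top).ne
  have hnn : 0 ≤ᵐ[F] fun y => co * max (a - y) 0 + cu * max (y - a) 0 :=
    Eventually.of_forall (fun y => by positivity)
  have hcont : Continuous fun y : ℝ => co * max (a - y) 0 + cu * max (y - a) 0 := by
    fun_prop
  rw [integral_eq_lintegral_of_nonneg_ae hnn hcont.aestronglyMeasurable]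
  have hofReal : ∀ y : ℝ, ENNReal.ofReal (co * max (a - y) 0 + cu * max (y - a) 0)
      = ENNReal.ofReal co * ENNReal.ofReal (max (a - y) 0)
        + ENNReal.ofReal cu * ENNReal.ofReal (max (y - a) 0) := by
    intro y
    rw [ENNReal.ofReal_add (by positivity) (by positivity),
      ENNReal.ofReal_mul hco.le, ENNReal.ofReal_mul hcu.le]
  simp_rw [hofReal]
  have hm1 : Measurable fun y : ℝ => ENNReal.ofReal (max (a - y) 0) := by fun_prop
  have hm2 : Measurable fun y : ℝ => ENNReal.ofReal (max (y - a) 0) := by fun_prop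
  rw [lintegral_add_left (hm1.const_mul _), lintegral_const_mul _ hm1,
    lintegral_const_mul _ hm2, aux1 F hF a, aux2 F hF a,
    ENNReal.toReal_add (by finiteness) (by finiteness), ENNReal.toReal_mul,
    ENNReal.toReal_mul, ENNReal.toReal_ofReal hco.le, ENNReal.toReal_ofReal hcu.le]
  have e1 : (∫⁻ z in Ioc (0:ℝ) a, F (Iio z)).toReal = ∫ z in Ioc (0:ℝ) a, cdf F z := by
    rw [← integral_toReal (hmIio.aemeasurable.restrict)
      (Eventually.of_forall (fun z => (measure_lt_top F _)))]
    exact integral_congr_ae (ae_restrict_of_ae hA)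
  have e2 : (∫⁻ z in Ioc a (1:ℝ), F (Ici z)).toReal = ∫ z in Ioc a (1:ℝ), (1 - cdf F z) := by
    rw [← integral_toReal (hmIci.aemeasurable.restrict)
      (Eventually.of_forall (fun z => (measure_lt_top F _)))]
    exact integral_congr_ae (ae_restrict_of_ae hB)
  rw [e1, e2]

theorem stmt1 (co cu q : ℝ) (hco : 0 < co) (hcu : 0 < cu) (hsum : co + cu = 1)
    (hq : q = cu)
    (F : Measure ℝ) [IsProbabilityMeasure F] (hF : F (Icc (0:ℝ) 1)ᶜ = 0) :
    sInf ((fun a => ∫ y, (co * max (a - y) 0 + cu * max (y - a) 0) ∂F) '' Icc (0:ℝ) 1)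
      = ∫ z in (0:ℝ)..1,
          min ((1 - q) * (F (Iic z)).toReal) (q * (1 - (F (Iic z)).toReal)) := by
  have hq0 : 0 < q := hq ▸ hcu
  have hcoq : co = 1 - q := by rw [hq]; linarith
  have hq1 : q < 1 := by rw [hq]; linarith
  have hrhs : (∫ z in (0:ℝ)..1, min ((1 - q) * (F (Iic z)).toReal) (q * (1 - (F (Iic z)).toReal)))
      = ∫ z in Ioc (0:ℝ) 1, min ((1 - q) * cdf F z) (q * (1 - cdf F z)) := by
    rw [intervalIntegral.integral_of_le zero_le_one]
    exact setIntegral_congr_fun measurableSet_Ioc (fun z _ => by rw [cdf_eq_real, measureReal_def])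
  rw [hrhs]
  set h : ℝ → ℝ := fun z => min ((1 - q) * cdf F z) (q * (1 - cdf F z)) with hh
  -- integrability
  have hmcdf : Measurable fun z : ℝ => cdf F z := (monotone_cdf F).measurable
  have hint1 : ∀ c d : ℝ, IntegrableOn (fun z => cdf F z) (Ioc c d) volume := by
    intro c d
    apply Measure.integrableOn_of_bounded (M := 1) measure_Ioc_lt_top.ne
      hmcdf.aestronglyMeasurable
    refine Eventually.of_forall (fun z => ?_)
    rw [Real.norm_eq_abs, abs_le]
    exact ⟨by nlinarith [cdf_nonneg F z], cdf_le_one F z⟩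
  have hint2 : ∀ c d : ℝ, IntegrableOn (fun z => 1 - cdf F z) (Ioc c d) volume := by
    intro c d
    apply Measure.integrableOn_of_bounded (M := 1) measure_Ioc_lt_top.ne
      ((measurable_const.sub hmcdf).aestronglyMeasurable)
    refine Eventually.of_forall (fun z => ?_)
    rw [Real.norm_eq_abs, abs_le]
    exact ⟨by simp only [Pi.sub_apply]; nlinarith [cdf_le_one F z], by simp only [Pi.sub_apply]; nlinarith [cdf_nonneg F z]⟩
  have hinth : ∀ c d : ℝ, IntegrableOn h (Ioc c d) volume := by
    intro c d
    apply Measure.integrableOn_of_bounded (M := 1) measure_Ioc_lt_top.ne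
      (((hmcdf.const_mul _).min ((measurable_const.sub hmcdf).const_mul _)).aestronglyMeasurable)
    refine Eventually.of_forall (fun z => ?_)
    rw [Real.norm_eq_abs, abs_le]
    constructor
    · have : 0 ≤ (1 - q) * cdf F z := by nlinarith [cdf_nonneg F z]
      have h2 : 0 ≤ q * (1 - cdf F z) := by nlinarith [cdf_le_one F z]
      simp only [hh, le_min_iff]
      exact ⟨by linarith, by simp only [Pi.sub_apply]; linarith⟩
    · calc h z ≤ (1 - q) * cdf F z := min_le_left _ _
        _ ≤ 1 := by nlinarith [cdf_nonneg F z, cdf_le_one F z]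
  have hsplit : ∀ a ∈ Icc (0:ℝ) 1, (∫ z in Ioc (0:ℝ) 1, h z)
      = (∫ z in Ioc (0:ℝ) a, h z) + ∫ z in Ioc a (1:ℝ), h z := by
    intro a ha
    rw [← Ioc_union_Ioc_eq_Ioc ha.1 ha.2,
      setIntegral_union (Ioc_disjoint_Ioc_of_le le_rfl) measurableSet_Ioc (hinth _ _) (hinth _ _)]
  -- lower bound
  have hlb : ∀ a ∈ Icc (0:ℝ) 1, (∫ z in Ioc (0:ℝ) 1, h z)
      ≤ ∫ y, (co * max (a - y) 0 + cu * max (y - a) 0) ∂F := by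
    intro a ha
    rw [keyL co cu hco hcu F hF a, hsplit a ha]
    have p1 : (∫ z in Ioc (0:ℝ) a, h z) ≤ co * ∫ z in Ioc (0:ℝ) a, cdf F z := by
      rw [hcoq, ← integral_const_mul]
      exact setIntegral_mono_on (hinth _ _) ((hint1 _ _).const_mul _) measurableSet_Ioc
        (fun z _ => min_le_left _ _)
    have p2 : (∫ z in Ioc a (1:ℝ), h z) ≤ cu * ∫ z in Ioc a (1:ℝ), (1 - cdf F z) := by
      rw [← hq, ← integral_const_mul]
      exact setIntegral_mono_on (hinth _ _) ((hint2 _ _).const_mul _) measurableSet_Ioc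
        (fun z _ => min_le_right _ _)
    exact add_le_add p1 p2
  -- the quantile
  set S : Set ℝ := {z : ℝ | q ≤ cdf F z} with hS
  have h1S : (1:ℝ) ∈ S := by
    have hIic : F (Iic (1:ℝ)) = 1 := by
      rw [← prob_compl_eq_zero_iff measurableSet_Iic]
      refine measure_mono_null (fun y hy => ?_) hF
      simp only [mem_compl_iff, mem_Iic, not_le, mem_Icc, not_and_or] at hy ⊢
      exact Or.inr hy
    simp only [hS, mem_setOf_eq, cdf_eq_real, measureReal_def, hIic, ENNReal.toReal_one]
    exact hq1.le
  have hlbS : ∀ z ∈ S, (0:ℝ) ≤ z := by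
    intro z hz
    by_contra hc
    push_neg at hc
    have : F (Iic z) = 0 := by
      refine measure_mono_null (fun y hy => ?_) hF
      simp only [mem_compl_iff, mem_Iic, mem_Icc, not_and_or, not_le] at hy ⊢
      exact Or.inl (lt_of_le_of_lt hy hc)
    simp only [hS, mem_setOf_eq, cdf_eq_real, measureReal_def, this, ENNReal.toReal_zero] at hz
    linarith
  have hbddS : BddBelow S := ⟨0, hlbS⟩
  set a : ℝ := sInf S with ha_def
  have ha0 : 0 ≤ a := le_csInf ⟨1, h1S⟩ hlbS
  have ha1 : a ≤ 1 := csInf_le hbddS h1S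
  have hqa : q ≤ cdf F a := by
    have htd : Tendsto (fun z => cdf F z) (𝓝[>] a) (𝓝 (cdf F a)) :=
      ((cdf F).right_continuous a).tendsto.mono_left (nhdsWithin_mono a Ioi_subset_Ici_self)
    refine ge_of_tendsto htd ?_
    filter_upwards [self_mem_nhdsWithin] with z hz
    obtain ⟨s, hsS, hs_lt⟩ := exists_lt_of_csInf_lt ⟨1, h1S⟩ hz
    exact le_trans hsS (monotone_cdf F hs_lt.le)
  have hlt : ∀ z, z < a → cdf F z ≤ q := by
    intro z hz
    by_contra hc
    push_neg at hc
    exact absurd (csInf_le hbddS (mem_setOf_eq ▸ hc.le)) (not_le.mpr hz)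
  -- equality at the quantile
  have heq : (∫ y, (co * max (a - y) 0 + cu * max (y - a) 0) ∂F)
      = ∫ z in Ioc (0:ℝ) 1, h z := by
    rw [keyL co cu hco hcu F hF a, hsplit a ⟨ha0, ha1⟩]
    have e1 : (∫ z in Ioc (0:ℝ) a, h z) = co * ∫ z in Ioc (0:ℝ) a, cdf F z := by
      rw [hcoq, ← integral_const_mul]
      apply integral_congr_ae
      have hne : ∀ᵐ z : ℝ ∂volume, z ≠ a := by
        rw [ae_iff]
        have : {z : ℝ | ¬z ≠ a} = {a} := by ext; simp
        rw [this]
        exact measure_singleton a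
      have key : ∀ᵐ z ∂(volume.restrict (Ioc (0:ℝ) a)), h z = (1 - q) * cdf F z := by
        rw [ae_restrict_iff' measurableSet_Ioc]
        filter_upwards [hne] with z hz hzIoc
        have hz_lt : z < a := lt_of_le_of_ne hzIoc.2 hz
        have hczq := hlt z hz_lt
        exact min_eq_left (by nlinarith [cdf_nonneg F z])
      exact key
    have e2 : (∫ z in Ioc a (1:ℝ), h z) = cu * ∫ z in Ioc a (1:ℝ), (1 - cdf F z) := by
      rw [← hq, ← integral_const_mul]
      apply setIntegral_congr_fun measurableSet_Ioc
      intro z hz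
      have hczq : q ≤ cdf F z := le_trans hqa (monotone_cdf F hz.1.le)
      exact min_eq_right (by nlinarith)
    rw [e1, e2]
  -- conclude
  apply le_antisymm
  · apply csInf_le
    · refine ⟨∫ z in Ioc (0:ℝ) 1, h z, ?_⟩
      rintro x ⟨b, hb, rfl⟩
      exact hlb b hb
    · exact ⟨a, ⟨ha0, ha1⟩, heq⟩
  · refine le_csInf (Set.Nonempty.image _ ⟨0, le_refl 0, zero_le_one⟩) ?_
    rintro x ⟨b, hb, rfl⟩
    exact hlb b hb
end

section
/- Let G be a probability distribution on [0,1] (representing a randomized action) and F a distribution on [0,1]. Then the expected newsvendor loss satisfies E_{a∼G}[L(a,F)] = (c_u + c_o)·∫₀^∞ [Ḡ(z)·(F(z) − q) + q·(1 − F(z))] dz, where Ḡ(z) = 1 − G(z) and q = c_u/(c_o + c_u). -/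
open MeasureTheory Set

noncomputable section NV

/-- The indicator-based integrand. -/
def psiNV (co cu a y z : ℝ) : ℝ :=
  co * ((Iic z).indicator (fun _ => (1:ℝ)) y * (Ioi z).indicator (fun _ => (1:ℝ)) a)
  + cu * ((Ioi z).indicator (fun _ => (1:ℝ)) y * (Iic z).indicator (fun _ => (1:ℝ)) a)

lemma psiNV_eq (co cu a y z : ℝ) :
    psiNV co cu a y z = co * (Ico y a).indicator (fun _ => (1:ℝ)) z
      + cu * (Ico a y).indicator (fun _ => (1:ℝ)) z := by
  unfold psiNV
  rcases le_or_gt y z with h1 | h1 <;> rcases lt_or_ge z a with h2 | h2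
  · simp [Set.indicator_apply, mem_Iic, mem_Ioi, mem_Ico, h1, h2, not_lt.mpr h1, not_le.mpr h2]
  · simp [Set.indicator_apply, mem_Iic, mem_Ioi, mem_Ico, h1, h2, not_lt.mpr h1, not_lt.mpr h2]
  · simp [Set.indicator_apply, mem_Iic, mem_Ioi, mem_Ico, h1, h2, not_le.mpr h1, not_le.mpr h2]
  · simp [Set.indicator_apply, mem_Iic, mem_Ioi, mem_Ico, h1, h2, not_le.mpr h1, not_lt.mpr h2]

lemma vol_Ico_inter (y a : ℝ) (hy : 0 ≤ y) :
    (volume (Ico y a ∩ Ioi (0:ℝ))).toReal = max (a - y) 0 := by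
  rcases eq_or_lt_of_le hy with h | h
  · have hset : Ico (0:ℝ) a ∩ Ioi 0 = Ioo 0 a := by
      ext z
      simp only [mem_inter_iff, mem_Ico, mem_Ioi, mem_Ioo]
      constructor
      · rintro ⟨⟨_, h2⟩, h3⟩; exact ⟨h3, h2⟩
      · rintro ⟨h1, h2⟩; exact ⟨⟨h1.le, h2⟩, h1⟩
    rw [← h, hset, Real.volume_Ioo, ENNReal.toReal_ofReal', sub_zero]
  · have hsub : Ico y a ⊆ Ioi 0 := fun z hz => h.trans_le hz.1
    rw [inter_eq_left.2 hsub, Real.volume_Ico, ENNReal.toReal_ofReal']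

lemma integral_ind_Ico (y a : ℝ) (hy : 0 ≤ y) :
    ∫ z in Ioi (0:ℝ), (Ico y a).indicator (fun _ => (1:ℝ)) z = max (a - y) 0 := by
  rw [integral_indicator measurableSet_Ico, setIntegral_const,
    measureReal_def, Measure.restrict_apply measurableSet_Ico, smul_eq_mul, mul_one]
  exact vol_Ico_inter y a hy

lemma integrable_ind_Ico (y a : ℝ) :
    Integrable ((Ico y a).indicator (fun _ => (1:ℝ))) (volume.restrict (Ioi 0)) := by
  refine (integrable_indicator_iff measurableSet_Ico).2 ?_
  refine integrableOn_const (lt_top_iff_ne_top.1 ?_)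
  calc (volume.restrict (Ioi (0:ℝ))) (Ico y a) ≤ volume (Ico y a) :=
        Measure.restrict_le_self _
    _ < ⊤ := by rw [Real.volume_Ico]; exact ENNReal.ofReal_lt_top

lemma integral_psiNV_z (co cu a y : ℝ) (hy : 0 ≤ y) (ha : 0 ≤ a) :
    ∫ z in Ioi (0:ℝ), psiNV co cu a y z
      = co * max (a - y) 0 + cu * max (y - a) 0 := by
  have hrw : (fun z => psiNV co cu a y z)
      = fun z => co * (Ico y a).indicator (fun _ => (1:ℝ)) z
        + cu * (Ico a y).indicator (fun _ => (1:ℝ)) z := by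
    funext z; exact psiNV_eq co cu a y z
  rw [hrw, integral_add ((integrable_ind_Ico y a).const_mul co)
      ((integrable_ind_Ico a y).const_mul cu),
    integral_const_mul, integral_const_mul,
    integral_ind_Ico y a hy, integral_ind_Ico a y ha]

lemma compl_toReal (μ : Measure ℝ) [IsProbabilityMeasure μ] (z : ℝ) :
    (μ (Ioi z)).toReal = 1 - (μ (Iic z)).toReal := by
  have h : μ (Iic z)ᶜ = 1 - μ (Iic z) := prob_compl_eq_one_sub measurableSet_Iic
  rw [compl_Iic] at h
  rw [h, ENNReal.toReal_sub_of_le prob_le_one ENNReal.one_ne_top, ENNReal.toReal_one]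

lemma indicator_integral_prob (μ : Measure ℝ) [IsProbabilityMeasure μ]
    {s : Set ℝ} (hs : MeasurableSet s) :
    ∫ x, s.indicator (fun _ => (1:ℝ)) x ∂μ = (μ s).toReal := by
  rw [integral_indicator_const (1:ℝ) hs, smul_eq_mul, mul_one, measureReal_def]

lemma integrable_ind_prob (μ : Measure ℝ) [IsProbabilityMeasure μ]
    {s : Set ℝ} (hs : MeasurableSet s) :
    Integrable (s.indicator (fun _ => (1:ℝ))) μ := by
  refine (integrable_indicator_iff hs).2 (integrableOn_const (lt_top_iff_ne_top.1 ?_))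
  exact (measure_lt_top μ s)

lemma ind_le_one (s : Set ℝ) (x : ℝ) :
    0 ≤ s.indicator (fun _ => (1:ℝ)) x ∧ s.indicator (fun _ => (1:ℝ)) x ≤ 1 := by
  by_cases h : x ∈ s <;> simp [Set.indicator_of_mem, Set.indicator_of_notMem, h]

lemma meas_psi_uncurry (co cu a : ℝ) :
    Measurable (fun p : ℝ × ℝ => psiNV co cu a p.1 p.2) := by
  have e1 : (fun p : ℝ × ℝ => (Iic p.2).indicator (fun _ => (1:ℝ)) p.1)
      = {p : ℝ × ℝ | p.1 ≤ p.2}.indicator (fun _ => (1:ℝ)) := by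
    funext p; simp [Set.indicator_apply, mem_Iic]
  have e2 : (fun p : ℝ × ℝ => (Ioi p.2).indicator (fun _ => (1:ℝ)) a)
      = {p : ℝ × ℝ | p.2 < a}.indicator (fun _ => (1:ℝ)) := by
    funext p; simp [Set.indicator_apply, mem_Ioi]
  have e3 : (fun p : ℝ × ℝ => (Ioi p.2).indicator (fun _ => (1:ℝ)) p.1)
      = {p : ℝ × ℝ | p.2 < p.1}.indicator (fun _ => (1:ℝ)) := by
    funext p; simp [Set.indicator_apply, mem_Ioi]
  have e4 : (fun p : ℝ × ℝ => (Iic p.2).indicator (fun _ => (1:ℝ)) a)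
      = {p : ℝ × ℝ | a ≤ p.2}.indicator (fun _ => (1:ℝ)) := by
    funext p; simp [Set.indicator_apply, mem_Iic]
  have m1 : Measurable (fun p : ℝ × ℝ => (Iic p.2).indicator (fun _ => (1:ℝ)) p.1) := by
    rw [e1]; exact measurable_const.indicator (measurableSet_le measurable_fst measurable_snd)
  have m2 : Measurable (fun p : ℝ × ℝ => (Ioi p.2).indicator (fun _ => (1:ℝ)) a) := by
    rw [e2]; exact measurable_const.indicator (measurableSet_lt measurable_snd measurable_const)
  have m3 : Measurable (fun p : ℝ × ℝ => (Ioi p.2).indicator (fun _ => (1:ℝ)) p.1) := by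
    rw [e3]; exact measurable_const.indicator (measurableSet_lt measurable_snd measurable_fst)
  have m4 : Measurable (fun p : ℝ × ℝ => (Iic p.2).indicator (fun _ => (1:ℝ)) a) := by
    rw [e4]; exact measurable_const.indicator (measurableSet_le measurable_const measurable_snd)
  unfold psiNV
  exact ((m1.mul m2).const_mul co).add ((m3.mul m4).const_mul cu)

lemma psi_bound (co cu : ℝ) (hco : 0 ≤ co) (hcu : 0 ≤ cu) (a y z : ℝ)
    (ha : a ≤ 1) (hy : y ≤ 1) :
    ‖psiNV co cu a y z‖ ≤ (co + cu) * (Iio (1:ℝ)).indicator (fun _ => (1:ℝ)) z := by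
  by_cases hz : z < 1
  · rw [Set.indicator_of_mem (mem_Iio.2 hz), mul_one]
    unfold psiNV
    obtain ⟨b1, b1'⟩ := ind_le_one (Iic z) y
    obtain ⟨b2, b2'⟩ := ind_le_one (Ioi z) a
    obtain ⟨b3, b3'⟩ := ind_le_one (Ioi z) y
    obtain ⟨b4, b4'⟩ := ind_le_one (Iic z) a
    have h12 : (Iic z).indicator (fun _ => (1:ℝ)) y * (Ioi z).indicator (fun _ => (1:ℝ)) a ≤ 1 :=
      mul_le_one₀ b1' b2 b2'
    have h34 : (Ioi z).indicator (fun _ => (1:ℝ)) y * (Iic z).indicator (fun _ => (1:ℝ)) a ≤ 1 :=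
      mul_le_one₀ b3' b4 b4'
    have p12 := mul_nonneg b1 b2
    have p34 := mul_nonneg b3 b4
    have q1 := mul_le_mul_of_nonneg_left h12 hco
    have q2 := mul_le_mul_of_nonneg_left h34 hcu
    have q3 := mul_nonneg hco p12
    have q4 := mul_nonneg hcu p34
    rw [Real.norm_eq_abs, abs_le]
    constructor <;> nlinarith
  · push_neg at hz
    have h1 : (Ioi z).indicator (fun _ => (1:ℝ)) a = 0 :=
      Set.indicator_of_notMem (by simpa using (ha.trans hz).not_gt) _
    have h2 : (Ioi z).indicator (fun _ => (1:ℝ)) y = 0 :=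
      Set.indicator_of_notMem (by simpa using (hy.trans hz).not_gt) _
    have h3 : (Iio (1:ℝ)).indicator (fun _ => (1:ℝ)) z = 0 :=
      Set.indicator_of_notMem (by simpa using hz.not_gt) _
    simp [psiNV, h1, h2, h3]

/-- The integrand after integrating out `y`. -/
def PhiNV (F : Measure ℝ) (co cu a z : ℝ) : ℝ :=
  co * (F (Iic z)).toReal * (Ioi z).indicator (fun _ => (1:ℝ)) a
    + cu * (F (Ioi z)).toReal * (Iic z).indicator (fun _ => (1:ℝ)) a

theorem stmt3 (co cu : ℝ) (hco : 0 < co) (hcu : 0 < cu) (q : ℝ) (hq : q = cu / (co + cu))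
    (F G : Measure ℝ) [IsProbabilityMeasure F] [IsProbabilityMeasure G]
    (hF : F (Icc (0:ℝ) 1)ᶜ = 0) (hG : G (Icc (0:ℝ) 1)ᶜ = 0) :
    ∫ a, (∫ y, (co * max (a - y) 0 + cu * max (y - a) 0) ∂F) ∂G
      = (cu + co) * ∫ z in Ioi (0:ℝ),
          ((1 - (G (Iic z)).toReal) * ((F (Iic z)).toReal - q)
            + q * (1 - (F (Iic z)).toReal)) := by
  have hFae : ∀ᵐ y ∂F, y ∈ Icc (0:ℝ) 1 := by
    rw [ae_iff]; simpa [compl_def] using hF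
  have hGae : ∀ᵐ a ∂G, a ∈ Icc (0:ℝ) 1 := by
    rw [ae_iff]; simpa [compl_def] using hG
  set μz : Measure ℝ := volume.restrict (Ioi 0) with hμz
  have hμzIio : μz (Iio 1) ≠ ⊤ := by
    rw [hμz, Measure.restrict_apply measurableSet_Iio, inter_comm, Ioi_inter_Iio,
      Real.volume_Ioo]
    exact ENNReal.ofReal_ne_top
  -- measurability of the cdf functions
  have hFmeas : Measurable (fun z => (F (Iic z)).toReal) := by
    apply Monotone.measurable
    intro u v huv
    exact ENNReal.toReal_mono (measure_ne_top F _) (measure_mono (Iic_subset_Iic.2 huv))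
  have hFmeas' : Measurable (fun z => (F (Ioi z)).toReal) := by
    have : (fun z => (F (Ioi z)).toReal) = fun z => 1 - (F (Iic z)).toReal := by
      funext z; exact compl_toReal F z
    rw [this]; exact measurable_const.sub hFmeas
  have hFz1 : ∀ z : ℝ, 1 ≤ z → (F (Ioi z)).toReal = 0 := by
    intro z hz
    have : F (Ioi z) = 0 := by
      refine measure_mono_null (fun x hx => ?_) hF
      simp only [mem_compl_iff, mem_Icc, not_and, not_le]
      exact fun _ => hz.trans_lt hx
    simp [this]
  -- the dominating function for Fubini
  have hdom : Integrable (fun p : ℝ × ℝ => (co + cu) * (Iio (1:ℝ)).indicator (fun _ => (1:ℝ)) p.2)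
      (F.prod μz) := by
    have h1 : Integrable ((univ ×ˢ Iio (1:ℝ)).indicator (fun _ => (1:ℝ))) (F.prod μz) := by
      refine (integrable_indicator_iff (MeasurableSet.univ.prod measurableSet_Iio)).2
        (integrableOn_const (lt_top_iff_ne_top.1 ?_))
      rw [Measure.prod_prod, measure_univ, one_mul]
      exact lt_top_iff_ne_top.2 hμzIio
    have heq : (fun p : ℝ × ℝ => (co + cu) * (Iio (1:ℝ)).indicator (fun _ => (1:ℝ)) p.2)
        = fun p => (co + cu) * (univ ×ˢ Iio (1:ℝ)).indicator (fun _ => (1:ℝ)) p := by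
      funext p
      by_cases h : p.2 ∈ Iio (1:ℝ) <;>
        simp [Set.indicator_apply, h, Set.mem_prod]
    rw [heq]
    exact h1.const_mul _
  -- the same dominating function, over G
  have hdomG : Integrable (fun p : ℝ × ℝ => (co + cu) * (Iio (1:ℝ)).indicator (fun _ => (1:ℝ)) p.2)
      (G.prod μz) := by
    have h1 : Integrable ((univ ×ˢ Iio (1:ℝ)).indicator (fun _ => (1:ℝ))) (G.prod μz) := by
      refine (integrable_indicator_iff (MeasurableSet.univ.prod measurableSet_Iio)).2
        (integrableOn_const (lt_top_iff_ne_top.1 ?_))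
      rw [Measure.prod_prod, measure_univ, one_mul]
      exact lt_top_iff_ne_top.2 hμzIio
    have heq : (fun p : ℝ × ℝ => (co + cu) * (Iio (1:ℝ)).indicator (fun _ => (1:ℝ)) p.2)
        = fun p => (co + cu) * (univ ×ˢ Iio (1:ℝ)).indicator (fun _ => (1:ℝ)) p := by
      funext p
      by_cases h : p.2 ∈ Iio (1:ℝ) <;>
        simp [Set.indicator_apply, h, Set.mem_prod]
    rw [heq]
    exact h1.const_mul _
  -- a.e. first coordinate in [0,1] on the products
  have hprodF : ∀ᵐ p ∂(F.prod μz), p.1 ∈ Icc (0:ℝ) 1 := by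
    rw [ae_iff]
    have hs : {p : ℝ × ℝ | ¬ p.1 ∈ Icc (0:ℝ) 1} = ((Icc (0:ℝ) 1)ᶜ) ×ˢ (univ : Set ℝ) := by
      ext p; simp
    rw [hs, Measure.prod_prod, hF, zero_mul]
  have hprodG : ∀ᵐ p ∂(G.prod μz), p.1 ∈ Icc (0:ℝ) 1 := by
    rw [ae_iff]
    have hs : {p : ℝ × ℝ | ¬ p.1 ∈ Icc (0:ℝ) 1} = ((Icc (0:ℝ) 1)ᶜ) ×ˢ (univ : Set ℝ) := by
      ext p; simp
    rw [hs, Measure.prod_prod, hG, zero_mul]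
  -- Step 1 : rewrite the inner losses as integrals over z
  have step1 : ∫ a, (∫ y, (co * max (a - y) 0 + cu * max (y - a) 0) ∂F) ∂G
      = ∫ a, (∫ y, (∫ z, psiNV co cu a y z ∂μz) ∂F) ∂G := by
    refine integral_congr_ae ?_
    filter_upwards [hGae] with a ha
    refine integral_congr_ae ?_
    filter_upwards [hFae] with y hy
    exact (integral_psiNV_z co cu a y hy.1 ha.1).symm
  -- Step 2 : swap the F and z integrals
  have step2 : ∫ a, (∫ y, (∫ z, psiNV co cu a y z ∂μz) ∂F) ∂G
      = ∫ a, (∫ z, (∫ y, psiNV co cu a y z ∂F) ∂μz) ∂G := by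
    refine integral_congr_ae ?_
    filter_upwards [hGae] with a ha
    refine integral_integral_swap ?_
    refine Integrable.mono' hdom ((meas_psi_uncurry co cu a).aestronglyMeasurable) ?_
    filter_upwards [hprodF] with p hp
    exact psi_bound co cu hco.le hcu.le a p.1 p.2 ha.2 hp.2
  -- Step 3 : compute the inner F-integral
  have step3 : ∀ a z : ℝ, ∫ y, psiNV co cu a y z ∂F = PhiNV F co cu a z := by
    intro a z
    have hrw : (fun y => psiNV co cu a y z)
        = fun y => (co * (Ioi z).indicator (fun _ => (1:ℝ)) a) * (Iic z).indicator (fun _ => (1:ℝ)) y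
          + (cu * (Iic z).indicator (fun _ => (1:ℝ)) a) * (Ioi z).indicator (fun _ => (1:ℝ)) y := by
      funext y; unfold psiNV; ring
    rw [hrw, integral_add ((integrable_ind_prob F measurableSet_Iic).const_mul _)
        ((integrable_ind_prob F measurableSet_Ioi).const_mul _),
      integral_const_mul, integral_const_mul,
      indicator_integral_prob F measurableSet_Iic, indicator_integral_prob F measurableSet_Ioi]
    unfold PhiNV; ring
  -- measurability of uncurried Phi
  have hPhiMeas : Measurable (fun p : ℝ × ℝ => PhiNV F co cu p.1 p.2) := by
    have e2 : (fun p : ℝ × ℝ => (Ioi p.2).indicator (fun _ => (1:ℝ)) p.1)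
        = {p : ℝ × ℝ | p.2 < p.1}.indicator (fun _ => (1:ℝ)) := by
      funext p; simp [Set.indicator_apply, mem_Ioi]
    have e4 : (fun p : ℝ × ℝ => (Iic p.2).indicator (fun _ => (1:ℝ)) p.1)
        = {p : ℝ × ℝ | p.1 ≤ p.2}.indicator (fun _ => (1:ℝ)) := by
      funext p; simp [Set.indicator_apply, mem_Iic]
    have m2 : Measurable (fun p : ℝ × ℝ => (Ioi p.2).indicator (fun _ => (1:ℝ)) p.1) := by
      rw [e2]; exact measurable_const.indicator (measurableSet_lt measurable_snd measurable_fst)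
    have m4 : Measurable (fun p : ℝ × ℝ => (Iic p.2).indicator (fun _ => (1:ℝ)) p.1) := by
      rw [e4]; exact measurable_const.indicator (measurableSet_le measurable_fst measurable_snd)
    unfold PhiNV
    exact (((measurable_const.mul (hFmeas.comp measurable_snd)).mul m2).add
      ((measurable_const.mul (hFmeas'.comp measurable_snd)).mul m4))
  -- bound for Phi
  have hPhiBound : ∀ a z : ℝ, a ∈ Icc (0:ℝ) 1 →
      ‖PhiNV F co cu a z‖ ≤ (co + cu) * (Iio (1:ℝ)).indicator (fun _ => (1:ℝ)) z := by
    intro a z ha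
    have hF0 : (0:ℝ) ≤ (F (Iic z)).toReal := ENNReal.toReal_nonneg
    have hF1 : (F (Iic z)).toReal ≤ 1 := by
      have := ENNReal.toReal_mono ENNReal.one_ne_top (prob_le_one (μ := F) (s := Iic z))
      simpa using this
    have hF0' : (0:ℝ) ≤ (F (Ioi z)).toReal := ENNReal.toReal_nonneg
    have hF1' : (F (Ioi z)).toReal ≤ 1 := by
      have := ENNReal.toReal_mono ENNReal.one_ne_top (prob_le_one (μ := F) (s := Ioi z))
      simpa using this
    by_cases hz : z < 1
    · rw [Set.indicator_of_mem (mem_Iio.2 hz), mul_one]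
      unfold PhiNV
      obtain ⟨b2, b2'⟩ := ind_le_one (Ioi z) a
      obtain ⟨b4, b4'⟩ := ind_le_one (Iic z) a
      have hm1 : (F (Iic z)).toReal * (Ioi z).indicator (fun _ => (1:ℝ)) a ≤ 1 :=
        mul_le_one₀ hF1 b2 b2'
      have hm1' : 0 ≤ (F (Iic z)).toReal * (Ioi z).indicator (fun _ => (1:ℝ)) a :=
        mul_nonneg hF0 b2
      have hm2 : (F (Ioi z)).toReal * (Iic z).indicator (fun _ => (1:ℝ)) a ≤ 1 :=
        mul_le_one₀ hF1' b4 b4'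
      have hm2' : 0 ≤ (F (Ioi z)).toReal * (Iic z).indicator (fun _ => (1:ℝ)) a :=
        mul_nonneg hF0' b4
      have t1 := mul_le_mul_of_nonneg_left hm1 hco.le
      have t2 := mul_le_mul_of_nonneg_left hm2 hcu.le
      have t3 := mul_nonneg hco.le hm1'
      have t4 := mul_nonneg hcu.le hm2'
      rw [Real.norm_eq_abs, abs_le]
      constructor <;> nlinarith [t1, t2, t3, t4]
    · push_neg at hz
      have h1 : (Ioi z).indicator (fun _ => (1:ℝ)) a = 0 :=
        Set.indicator_of_notMem (by simpa using (ha.2.trans hz).not_gt) _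
      have h3 : (Iio (1:ℝ)).indicator (fun _ => (1:ℝ)) z = 0 :=
        Set.indicator_of_notMem (by simpa using hz.not_gt) _
      simp [PhiNV, h1, h3, hFz1 z hz]
  -- Step 4 : swap the G and z integrals
  have step4 : ∫ a, (∫ z, PhiNV F co cu a z ∂μz) ∂G
      = ∫ z, (∫ a, PhiNV F co cu a z ∂G) ∂μz := by
    refine integral_integral_swap ?_
    refine Integrable.mono' hdomG hPhiMeas.aestronglyMeasurable ?_
    filter_upwards [hprodG] with p hp
    exact hPhiBound p.1 p.2 hp
  -- Step 5 : compute the G integral of Phi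
  have step5 : ∀ z : ℝ, ∫ a, PhiNV F co cu a z ∂G
      = co * (F (Iic z)).toReal * (G (Ioi z)).toReal
        + cu * (F (Ioi z)).toReal * (G (Iic z)).toReal := by
    intro z
    unfold PhiNV
    rw [integral_add ((integrable_ind_prob G measurableSet_Ioi).const_mul _)
        ((integrable_ind_prob G measurableSet_Iic).const_mul _),
      integral_const_mul, integral_const_mul,
      indicator_integral_prob G measurableSet_Ioi, indicator_integral_prob G measurableSet_Iic]
  -- Step 6 : final pointwise algebra
  have hsum : co + cu ≠ 0 := by positivity
  calc ∫ a, (∫ y, (co * max (a - y) 0 + cu * max (y - a) 0) ∂F) ∂G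
      = ∫ a, (∫ z, (∫ y, psiNV co cu a y z ∂F) ∂μz) ∂G := by rw [step1, step2]
    _ = ∫ a, (∫ z, PhiNV F co cu a z ∂μz) ∂G := by
        refine integral_congr_ae (ae_of_all _ fun a => ?_)
        refine integral_congr_ae (ae_of_all _ fun z => ?_)
        exact step3 a z
    _ = ∫ z, (∫ a, PhiNV F co cu a z ∂G) ∂μz := step4
    _ = ∫ z, ((cu + co) * ((1 - (G (Iic z)).toReal) * ((F (Iic z)).toReal - q)
            + q * (1 - (F (Iic z)).toReal))) ∂μz := by
        refine integral_congr_ae (ae_of_all _ fun z => ?_)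
        dsimp only
        rw [step5 z, compl_toReal F z, compl_toReal G z, hq]
        field_simp
        ring
    _ = (cu + co) * ∫ z, ((1 - (G (Iic z)).toReal) * ((F (Iic z)).toReal - q)
            + q * (1 - (F (Iic z)).toReal)) ∂μz := integral_const_mul _ _

end NV
end

section
/- The counting function of any counting policy is monotone: if π : [0,1]^n → [0,1] is a counting policy with counting function κ : {0,1}^n → {0,1}, then for all b, b' ∈ {0,1}^n with b_i ≤ b'_i for all i, we have κ(b) ≤ κ(b'). -/
open Set

theorem stmt5 (n : ℕ) (π : (Fin n → ℝ) → ℝ) (κ : (Fin n → Bool) → Bool)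
    (hπ : ∀ z ∈ Icc (0:ℝ) 1, ∀ y : Fin n → ℝ, (∀ i, y i ∈ Icc (0:ℝ) 1) →
      (π y ≤ z ↔ κ (fun i => decide (y i ≤ z)) = true))
    (b b' : Fin n → Bool) (hbb' : ∀ i, b i ≤ b' i) : κ b ≤ κ b' := by
  set y : Fin n → ℝ := fun i => if b i then 0 else if b' i then 1/2 else 1 with hy
  have hy01 : ∀ i, y i ∈ Icc (0:ℝ) 1 := by
    intro i; simp only [hy]
    split <;> [skip; split] <;> constructor <;> norm_num
  have h1 := hπ (1/4) (by constructor <;> norm_num) y hy01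
  have h2 := hπ (3/4) (by constructor <;> norm_num) y hy01
  have e1 : (fun i => decide (y i ≤ 1/4)) = b := by
    funext i; simp only [hy]
    rcases Bool.eq_false_or_eq_true (b i) with hb | hb <;>
      rcases Bool.eq_false_or_eq_true (b' i) with hb' | hb' <;>
      simp only [hb, hb', if_true, if_false] <;> norm_num
  have e2 : (fun i => decide (y i ≤ 3/4)) = b' := by
    funext i; simp only [hy]
    rcases Bool.eq_false_or_eq_true (b i) with hb | hb <;>
      rcases Bool.eq_false_or_eq_true (b' i) with hb' | hb' <;>
      simp only [hb, hb', if_true, if_false] <;> norm_num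
    exact absurd (hbb' i) (by simp [hb, hb'])
  rw [e1] at h1; rw [e2] at h2
  cases hb : κ b
  · simp
  · have : π y ≤ 1/4 := h1.mpr hb
    have : π y ≤ 3/4 := by linarith
    simp [h2.mp this]
end

section
/- There exists a weighted ERM policy that is not an order statistic policy. Specifically, for n = 4, c_o = c_u = 1/2, and weights w = (2,1,1,1), the weighted ERM policy π which outputs min{y₂,y₃,y₄} when y₁ is strictly smallest, max{y₂,y₃,y₄} when y₁ is strictly largest, and y₁ otherwise, is not equal to any order statistic policy y ↦ y_{(r),S}. -/
open Set

/-- The `r`-th order statistic with the conventions `y_{(0),S} = 0` and `y_{(r),S} = 1`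
when `r > |S|`. -/
noncomputable def orderStatExt (n : ℕ) (y : Fin n → ℝ) (S : Finset (Fin n)) (r : ℕ) : ℝ :=
  if r = 0 then 0
  else if S.card < r then 1
  else ((S.val.map y).sort (· ≤ ·)).getD (r - 1) 0

/-- The weighted ERM policy for `n = 4`, `c_o = c_u = 1/2` and weights `w = (2,1,1,1)`:
it outputs `min{y₂,y₃,y₄}` when `y₁` is strictly smallest, `max{y₂,y₃,y₄}` when `y₁` is
strictly largest, and `y₁` otherwise. -/
noncomputable def wermEx (y : Fin 4 → ℝ) : ℝ :=
  if ∀ i, i ≠ 0 → y 0 < y i then min (y 1) (min (y 2) (y 3))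
  else if ∀ i, i ≠ 0 → y i < y 0 then max (y 1) (max (y 2) (y 3))
  else y 0

lemma msort_cons (a : ℝ) (s : Multiset ℝ) :
    Multiset.sort (a ::ₘ s) (· ≤ ·) = (Multiset.sort s (· ≤ ·)).orderedInsert (· ≤ ·) a := by
  haveI : IsAntisymm ℝ (· ≤ ·) := ⟨fun _ _ => le_antisymm⟩
  have hp : (Multiset.sort (a ::ₘ s) (· ≤ ·)).Perm
      ((Multiset.sort s (· ≤ ·)).orderedInsert (· ≤ ·) a) := by
    rw [← Multiset.coe_eq_coe]
    have h2 : (((Multiset.sort s (· ≤ ·)).orderedInsert (· ≤ ·) a : List ℝ) : Multiset ℝ)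
        = a ::ₘ s := by
      rw [Multiset.coe_eq_coe.mpr (List.perm_orderedInsert _ a _)]
      rw [← Multiset.cons_coe, Multiset.sort_eq]
    rw [Multiset.sort_eq, h2]
  exact hp.eq_of_pairwise' (Multiset.pairwise_sort _ _)
    ((Multiset.pairwise_sort s _).orderedInsert a _)

set_option maxHeartbeats 2000000 in
theorem stmt11 :
    ¬ ∃ (S : Finset (Fin 4)) (r : ℕ), r ≤ 5 ∧
      ∀ y : Fin 4 → ℝ, (∀ i, y i ∈ Icc (0:ℝ) 1) → wermEx y = orderStatExt 4 y S r := by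
  rintro ⟨S, r, hr, h⟩
  have h1 := h ![1,0,0,0] (by intro i; fin_cases i <;> norm_num [Set.mem_Icc])
  have h2 := h ![1/2,0,1,1] (by intro i; fin_cases i <;> norm_num [Set.mem_Icc])
  have h3 := h ![1/2,1,0,1] (by intro i; fin_cases i <;> norm_num [Set.mem_Icc])
  have h4 := h ![1/2,1,1,0] (by intro i; fin_cases i <;> norm_num [Set.mem_Icc])
  have h5 := h ![1/2,0,0,1] (by intro i; fin_cases i <;> norm_num [Set.mem_Icc])
  clear h
  rw [show wermEx ![1,0,0,0] = 0 from by norm_num [wermEx, Fin.forall_fin_succ] <;> simp] at h1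
  rw [show wermEx ![1/2,0,1,1] = 1/2 from by norm_num [wermEx, Fin.forall_fin_succ] <;> simp] at h2
  rw [show wermEx ![1/2,1,0,1] = 1/2 from by norm_num [wermEx, Fin.forall_fin_succ] <;> simp] at h3
  rw [show wermEx ![1/2,1,1,0] = 1/2 from by norm_num [wermEx, Fin.forall_fin_succ] <;> simp] at h4
  rw [show wermEx ![1/2,0,0,1] = 1/2 from by norm_num [wermEx, Fin.forall_fin_succ] <;> simp] at h5
  have hS : ∀ T : Finset (Fin 4), T = (∅ : Finset (Fin 4)) ∨ T = ({0} : Finset (Fin 4)) ∨ T = ({1} : Finset (Fin 4)) ∨ T = ({2} : Finset (Fin 4)) ∨ T = ({3} : Finset (Fin 4)) ∨ T = ({0, 1} : Finset (Fin 4)) ∨ T = ({0, 2} : Finset (Fin 4)) ∨ T = ({0, 3} : Finset (Fin 4)) ∨ T = ({1, 2} : Finset (Fin 4)) ∨ T = ({1, 3} : Finset (Fin 4)) ∨ T = ({2, 3} : Finset (Fin 4)) ∨ T = ({0, 1, 2} : Finset (Fin 4)) ∨ T = ({0, 1, 3} : Finset (Fin 4)) ∨ T = ({0, 2, 3} : Finset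 (Fin 4)) ∨ T = ({1, 2, 3} : Finset (Fin 4)) ∨ T = ({0, 1, 2, 3} : Finset (Fin 4)) := by decide
  rcases hS S with rfl|rfl|rfl|rfl|rfl|rfl|rfl|rfl|rfl|rfl|rfl|rfl|rfl|rfl|rfl|rfl
  clear hS
  ·
    have hv : ((∅ : Finset (Fin 4))).val = (0 : Multiset (Fin 4)) := by decide
    have hc : ((∅ : Finset (Fin 4))).card = 0 := by decide
    interval_cases r <;> revert h1 h2 h3 h4 h5 <;>
      norm_num [orderStatExt, hv, hc, msort_cons, Multiset.sort_zero, Multiset.sort_singleton,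
        List.orderedInsert, Matrix.cons_val_two, Matrix.cons_val_three, Matrix.vecHead, Matrix.vecTail]
  ·
    have hv : (({0} : Finset (Fin 4))).val = ({0} : Multiset (Fin 4)) := by decide
    have hc : (({0} : Finset (Fin 4))).card = 1 := by decide
    interval_cases r <;> revert h1 h2 h3 h4 h5 <;>
      norm_num [orderStatExt, hv, hc, msort_cons, Multiset.sort_zero, Multiset.sort_singleton,
        List.orderedInsert, Matrix.cons_val_two, Matrix.cons_val_three, Matrix.vecHead, Matrix.vecTail]
  ·
    have hv : (({1} : Finset (Fin 4))).val = ({1} : Multiset (Fin 4)) := by decide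
    have hc : (({1} : Finset (Fin 4))).card = 1 := by decide
    interval_cases r <;> revert h1 h2 h3 h4 h5 <;>
      norm_num [orderStatExt, hv, hc, msort_cons, Multiset.sort_zero, Multiset.sort_singleton,
        List.orderedInsert, Matrix.cons_val_two, Matrix.cons_val_three, Matrix.vecHead, Matrix.vecTail]
  ·
    have hv : (({2} : Finset (Fin 4))).val = ({2} : Multiset (Fin 4)) := by decide
    have hc : (({2} : Finset (Fin 4))).card = 1 := by decide
    interval_cases r <;> revert h1 h2 h3 h4 h5 <;>
      norm_num [orderStatExt, hv, hc, msort_cons, Multiset.sort_zero, Multiset.sort_singleton,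
        List.orderedInsert, Matrix.cons_val_two, Matrix.cons_val_three, Matrix.vecHead, Matrix.vecTail]
  ·
    have hv : (({3} : Finset (Fin 4))).val = ({3} : Multiset (Fin 4)) := by decide
    have hc : (({3} : Finset (Fin 4))).card = 1 := by decide
    interval_cases r <;> revert h1 h2 h3 h4 h5 <;>
      norm_num [orderStatExt, hv, hc, msort_cons, Multiset.sort_zero, Multiset.sort_singleton,
        List.orderedInsert, Matrix.cons_val_two, Matrix.cons_val_three, Matrix.vecHead, Matrix.vecTail]
  ·
    have hv : (({0, 1} : Finset (Fin 4))).val = ({0, 1} : Multiset (Fin 4)) := by decide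
    have hc : (({0, 1} : Finset (Fin 4))).card = 2 := by decide
    interval_cases r <;> revert h1 h2 h3 h4 h5 <;>
      norm_num [orderStatExt, hv, hc, msort_cons, Multiset.sort_zero, Multiset.sort_singleton,
        List.orderedInsert, Matrix.cons_val_two, Matrix.cons_val_three, Matrix.vecHead, Matrix.vecTail]
  ·
    have hv : (({0, 2} : Finset (Fin 4))).val = ({0, 2} : Multiset (Fin 4)) := by decide
    have hc : (({0, 2} : Finset (Fin 4))).card = 2 := by decide
    interval_cases r <;> revert h1 h2 h3 h4 h5 <;>
      norm_num [orderStatExt, hv, hc, msort_cons, Multiset.sort_zero, Multiset.sort_singleton,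
        List.orderedInsert, Matrix.cons_val_two, Matrix.cons_val_three, Matrix.vecHead, Matrix.vecTail]
  ·
    have hv : (({0, 3} : Finset (Fin 4))).val = ({0, 3} : Multiset (Fin 4)) := by decide
    have hc : (({0, 3} : Finset (Fin 4))).card = 2 := by decide
    interval_cases r <;> revert h1 h2 h3 h4 h5 <;>
      norm_num [orderStatExt, hv, hc, msort_cons, Multiset.sort_zero, Multiset.sort_singleton,
        List.orderedInsert, Matrix.cons_val_two, Matrix.cons_val_three, Matrix.vecHead, Matrix.vecTail]
  ·
    have hv : (({1, 2} : Finset (Fin 4))).val = ({1, 2} : Multiset (Fin 4)) := by decide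
    have hc : (({1, 2} : Finset (Fin 4))).card = 2 := by decide
    interval_cases r <;> revert h1 h2 h3 h4 h5 <;>
      norm_num [orderStatExt, hv, hc, msort_cons, Multiset.sort_zero, Multiset.sort_singleton,
        List.orderedInsert, Matrix.cons_val_two, Matrix.cons_val_three, Matrix.vecHead, Matrix.vecTail]
  ·
    have hv : (({1, 3} : Finset (Fin 4))).val = ({1, 3} : Multiset (Fin 4)) := by decide
    have hc : (({1, 3} : Finset (Fin 4))).card = 2 := by decide
    interval_cases r <;> revert h1 h2 h3 h4 h5 <;>
      norm_num [orderStatExt, hv, hc, msort_cons, Multiset.sort_zero, Multiset.sort_singleton,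
        List.orderedInsert, Matrix.cons_val_two, Matrix.cons_val_three, Matrix.vecHead, Matrix.vecTail]
  ·
    have hv : (({2, 3} : Finset (Fin 4))).val = ({2, 3} : Multiset (Fin 4)) := by decide
    have hc : (({2, 3} : Finset (Fin 4))).card = 2 := by decide
    interval_cases r <;> revert h1 h2 h3 h4 h5 <;>
      norm_num [orderStatExt, hv, hc, msort_cons, Multiset.sort_zero, Multiset.sort_singleton,
        List.orderedInsert, Matrix.cons_val_two, Matrix.cons_val_three, Matrix.vecHead, Matrix.vecTail]
  ·
    have hv : (({0, 1, 2} : Finset (Fin 4))).val = ({0, 1, 2} : Multiset (Fin 4)) := by decide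
    have hc : (({0, 1, 2} : Finset (Fin 4))).card = 3 := by decide
    interval_cases r <;> revert h1 h2 h3 h4 h5 <;>
      norm_num [orderStatExt, hv, hc, msort_cons, Multiset.sort_zero, Multiset.sort_singleton,
        List.orderedInsert, Matrix.cons_val_two, Matrix.cons_val_three, Matrix.vecHead, Matrix.vecTail]
  ·
    have hv : (({0, 1, 3} : Finset (Fin 4))).val = ({0, 1, 3} : Multiset (Fin 4)) := by decide
    have hc : (({0, 1, 3} : Finset (Fin 4))).card = 3 := by decide
    interval_cases r <;> revert h1 h2 h3 h4 h5 <;>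
      norm_num [orderStatExt, hv, hc, msort_cons, Multiset.sort_zero, Multiset.sort_singleton,
        List.orderedInsert, Matrix.cons_val_two, Matrix.cons_val_three, Matrix.vecHead, Matrix.vecTail]
  ·
    have hv : (({0, 2, 3} : Finset (Fin 4))).val = ({0, 2, 3} : Multiset (Fin 4)) := by decide
    have hc : (({0, 2, 3} : Finset (Fin 4))).card = 3 := by decide
    interval_cases r <;> revert h1 h2 h3 h4 h5 <;>
      norm_num [orderStatExt, hv, hc, msort_cons, Multiset.sort_zero, Multiset.sort_singleton,
        List.orderedInsert, Matrix.cons_val_two, Matrix.cons_val_three, Matrix.vecHead, Matrix.vecTail]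
  ·
    have hv : (({1, 2, 3} : Finset (Fin 4))).val = ({1, 2, 3} : Multiset (Fin 4)) := by decide
    have hc : (({1, 2, 3} : Finset (Fin 4))).card = 3 := by decide
    interval_cases r <;> revert h1 h2 h3 h4 h5 <;>
      norm_num [orderStatExt, hv, hc, msort_cons, Multiset.sort_zero, Multiset.sort_singleton,
        List.orderedInsert, Matrix.cons_val_two, Matrix.cons_val_three, Matrix.vecHead, Matrix.vecTail]
  ·
    have hv : (({0, 1, 2, 3} : Finset (Fin 4))).val = ({0, 1, 2, 3} : Multiset (Fin 4)) := by decide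
    have hc : (({0, 1, 2, 3} : Finset (Fin 4))).card = 4 := by decide
    interval_cases r <;> revert h1 h2 h3 h4 h5 <;>
      norm_num [orderStatExt, hv, hc, msort_cons, Multiset.sort_zero, Multiset.sort_singleton,
        List.orderedInsert, Matrix.cons_val_two, Matrix.cons_val_three, Matrix.vecHead, Matrix.vecTail]
end

section
/- (Regret integral representation.) For a separable policy π with function P^π, distributions F (out-of-sample) and H₁,…,H_n on [0,1], with independent samples y_i ∼ H_i, the expected regret satisfies E[L(π(y),F)] − min_a L(a,F) = (c_u+c_o)·∫₀¹ [(1 − P^π(H₁(z),…,H_n(z)))·(F(z) − q) + q·(1 − F(z)) − min{(1−q)·F(z), q·(1−F(z))}] dz, where q = c_u/(c_u+c_o). -/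
open MeasureTheory Set Classical in
theorem dirac_arb {α : Type*} [MeasurableSpace α] [MeasurableSingletonClass α] (x : α) (A : Set α) :
    Measure.dirac x A = if x ∈ A then 1 else 0 := by
  by_cases h : x ∈ A
  · rw [if_pos h]
    refine le_antisymm ?_ ?_
    · simpa using measure_mono (μ := Measure.dirac x) (subset_univ A)
    · have := measure_mono (μ := Measure.dirac x) (singleton_subset_iff.mpr h)
      simpa using this
  · rw [if_neg h]
    refine measure_mono_null (fun a (ha : a ∈ A) (hax : a = x) => h (hax ▸ ha))
      (?_ : Measure.dirac x {x}ᶜ = 0)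
    rw [Measure.dirac_apply' _ (MeasurableSet.compl (measurableSet_singleton x))]
    simp

open MeasureTheory Set Classical in
theorem pi_dirac' (n : ℕ) (x : Fin n → ℝ) :
    Measure.pi (fun i => Measure.dirac (x i)) = Measure.dirac x := by
  refine Measure.pi_eq (μ' := Measure.dirac x) fun s hs => ?_
  rw [Measure.dirac_apply' _ (MeasurableSet.univ_pi hs)]
  rw [indicator_apply]
  simp only [mem_univ_pi, Pi.one_apply]
  by_cases h : ∀ i, x i ∈ s i
  · rw [if_pos h, Finset.prod_congr rfl (fun i _ => Measure.dirac_apply_of_mem (h i))]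
    simp
  · push_neg at h
    obtain ⟨i, hi⟩ := h
    rw [if_neg (by push_neg; exact ⟨i, hi⟩)]
    refine (Finset.prod_eq_zero (Finset.mem_univ i) ?_).symm
    rw [Measure.dirac_apply' _ (hs i)]
    simp [indicator_apply, hi]
open MeasureTheory Set

private theorem keyalg (co cu q x g : ℝ) (hco : 0 < co) (hcu : 0 < cu)
    (hq : q = cu / (cu + co)) :
    (1 - g) * (co * x) + g * (cu * (1 - x)) - min (co * x) (cu * (1 - x))
      = (cu + co) * ((1 - g) * (x - q) + q * (1 - x) - min ((1 - q) * x) (q * (1 - x))) := by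
  have hpos : (0:ℝ) < cu + co := by linarith
  have hne : cu + co ≠ 0 := ne_of_gt hpos
  have h1 : (cu + co) * ((1 - q) * x) = co * x := by
    rw [hq]; field_simp; ring
  have h2 : (cu + co) * (q * (1 - x)) = cu * (1 - x) := by
    rw [hq]; field_simp
  rcases le_total (co * x) (cu * (1 - x)) with h | h
  · rw [min_eq_left h, min_eq_left (le_of_mul_le_mul_left (by rw [h1, h2]; exact h) hpos)]
    rw [hq]; field_simp; ring
  · rw [min_eq_right h, min_eq_right (le_of_mul_le_mul_left (by rw [h1, h2]; exact h) hpos)]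
    rw [hq]; field_simp; ring
open MeasureTheory Set

private theorem ell_repr (co cu : ℝ) (F : Measure ℝ) [IsProbabilityMeasure F]
    (hF : F (Icc (0:ℝ) 1)ᶜ = 0) (a : ℝ) (ha : a ∈ Icc (0:ℝ) 1) :
    ∫ v, (co * max (a - v) 0 + cu * max (v - a) 0) ∂F
      = ∫ z in Ioc (0:ℝ) 1,
          (if z < a then co * (F (Iic z)).toReal else cu * (1 - (F (Iic z)).toReal)) := by
  haveI : IsFiniteMeasure (volume.restrict (Ioc (0:ℝ) 1)) :=
    ⟨by rw [Measure.restrict_apply_univ]; simp⟩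
  classical
  set k : ℝ → ℝ → ℝ := fun v z =>
    if z < a then (if v ≤ z then co else 0) else (if z < v then cu else 0) with hk
  have hvol : ∀ u w : ℝ, 0 ≤ u → w ≤ 1 →
      (volume.restrict (Ioc (0:ℝ) 1)) (Ico u w) = ENNReal.ofReal (w - u) := by
    intro u w hu hw
    rw [Measure.restrict_apply measurableSet_Ico]
    refine le_antisymm ?_ ?_
    · calc volume (Ico u w ∩ Ioc 0 1) ≤ volume (Ico u w) := measure_mono inter_subset_left
        _ = ENNReal.ofReal (w - u) := Real.volume_Ico
    · calc ENNReal.ofReal (w - u) = volume (Ioo u w) := Real.volume_Ioo.symm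
        _ ≤ volume (Ico u w ∩ Ioc 0 1) := measure_mono (fun t ht =>
            ⟨⟨ht.1.le, ht.2⟩, ⟨lt_of_le_of_lt hu ht.1, ht.2.le.trans hw⟩⟩)
  have stepA : ∀ v ∈ Icc (0:ℝ) 1, co * max (a - v) 0 + cu * max (v - a) 0
      = ∫ z in Ioc (0:ℝ) 1, k v z := by
    intro v hv
    have hkeq : ∀ z, k v z = co * (Ico v a).indicator (fun _ => (1:ℝ)) z
        + cu * (Ico a v).indicator (fun _ => (1:ℝ)) z := by
      intro z
      by_cases h1 : z < a
      · by_cases h2 : v ≤ z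
        · rw [indicator_of_mem (show z ∈ Ico v a from ⟨h2, h1⟩),
            indicator_of_notMem (fun hm => absurd hm.1 (not_le.mpr h1))]
          simp only [hk, if_pos h1, if_pos h2]; ring
        · rw [indicator_of_notMem (fun hm => h2 hm.1),
            indicator_of_notMem (fun hm => absurd hm.1 (not_le.mpr h1))]
          simp only [hk, if_pos h1, if_neg h2]; ring
      · by_cases h2 : z < v
        · rw [indicator_of_notMem (fun hm => h1 hm.2),
            indicator_of_mem (show z ∈ Ico a v from ⟨not_lt.mp h1, h2⟩)]
          simp only [hk, if_neg h1, if_pos h2]; ring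
        · rw [indicator_of_notMem (fun hm => h1 hm.2),
            indicator_of_notMem (fun hm => h2 hm.2)]
          simp only [hk, if_neg h1, if_neg h2]; ring
    have hind : ∀ s : Set ℝ, MeasurableSet s →
        Integrable (s.indicator (fun _ => (1:ℝ))) (volume.restrict (Ioc (0:ℝ) 1)) :=
      fun s hs => (integrable_const (1:ℝ)).indicator hs
    calc co * max (a - v) 0 + cu * max (v - a) 0
        = co * ((volume.restrict (Ioc (0:ℝ) 1)) (Ico v a)).toReal
          + cu * ((volume.restrict (Ioc (0:ℝ) 1)) (Ico a v)).toReal := by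
          rw [hvol v a hv.1 ha.2, hvol a v ha.1 hv.2, ENNReal.toReal_ofReal',
            ENNReal.toReal_ofReal']
      _ = ∫ z in Ioc (0:ℝ) 1, (co * (Ico v a).indicator (fun _ => (1:ℝ)) z
            + cu * (Ico a v).indicator (fun _ => (1:ℝ)) z) := by
          rw [integral_add ((hind _ measurableSet_Ico).const_mul co)
            ((hind _ measurableSet_Ico).const_mul cu),
            integral_const_mul, integral_const_mul,
            integral_indicator_const (1:ℝ) measurableSet_Ico,
            integral_indicator_const (1:ℝ) measurableSet_Ico]
          simp; rfl
      _ = ∫ z in Ioc (0:ℝ) 1, k v z := by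
          refine integral_congr_ae (ae_of_all _ fun z => ?_)
          rw [hkeq z]
  have hmk : Measurable (Function.uncurry k) := by
    refine Measurable.ite (measurableSet_lt measurable_snd measurable_const) ?_ ?_
    · exact Measurable.ite (measurableSet_le measurable_fst measurable_snd)
        measurable_const measurable_const
    · exact Measurable.ite (measurableSet_lt measurable_snd measurable_fst)
        measurable_const measurable_const
  have hik : Integrable (Function.uncurry k) (F.prod (volume.restrict (Ioc (0:ℝ) 1))) := by
    refine (integrable_const (|co| + |cu|)).mono' hmk.aestronglyMeasurable
      (ae_of_all _ fun p => ?_)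
    simp only [Function.uncurry, hk, Real.norm_eq_abs]
    split_ifs <;> simp [Real.norm_eq_abs] <;>
      linarith [abs_nonneg co, abs_nonneg cu]
  have hFae : ∀ᵐ v ∂F, v ∈ Icc (0:ℝ) 1 := by
    rw [ae_iff]
    exact hF
  calc ∫ v, (co * max (a - v) 0 + cu * max (v - a) 0) ∂F
      = ∫ v, (∫ z in Ioc (0:ℝ) 1, k v z) ∂F := by
        refine integral_congr_ae ?_
        filter_upwards [hFae] with v hv
        exact stepA v hv
    _ = ∫ z in Ioc (0:ℝ) 1, (∫ v, k v z ∂F) := integral_integral_swap hik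
    _ = ∫ z in Ioc (0:ℝ) 1,
          (if z < a then co * (F (Iic z)).toReal else cu * (1 - (F (Iic z)).toReal)) := by
        refine integral_congr_ae (ae_of_all _ fun z => ?_)
        by_cases hz : z < a
        · simp only [hk, if_pos hz]
          have : (fun v => if v ≤ z then co else 0) = (Iic z).indicator (fun _ => co) := by
            funext v; by_cases h : v ≤ z
            · rw [if_pos h, indicator_of_mem (show v ∈ Iic z from h)]
            · rw [if_neg h, indicator_of_notMem (show v ∉ Iic z from h)]
          rw [this, integral_indicator_const _ measurableSet_Iic, smul_eq_mul, mul_comm]; rfl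
        · simp only [hk, if_neg hz]
          have : (fun v => if z < v then cu else 0) = (Ioi z).indicator (fun _ => cu) := by
            funext v; by_cases h : z < v
            · rw [if_pos h, indicator_of_mem (show v ∈ Ioi z from h)]
            · rw [if_neg h, indicator_of_notMem (show v ∉ Ioi z from h)]
          rw [this, integral_indicator_const _ measurableSet_Ioi, smul_eq_mul]
          have hcompl : F (Ioi z) = 1 - F (Iic z) := by
            rw [← compl_Iic, prob_compl_eq_one_sub measurableSet_Iic]
          rw [measureReal_def, hcompl, ENNReal.toReal_sub_of_le prob_le_one ENNReal.one_ne_top,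
            ENNReal.toReal_one, mul_comm]

open MeasureTheory Set
open scoped ENNReal

set_option maxHeartbeats 1000000 in
theorem stmt17 (n : ℕ) (co cu : ℝ) (hco : 0 < co) (hcu : 0 < cu)
    (q : ℝ) (hq : q = cu / (cu + co))
    (π : (Fin n → ℝ) → ℝ) (P : (Fin n → ℝ) → ℝ)
    (hsep : ∀ H : Fin n → Measure ℝ, (∀ i, IsProbabilityMeasure (H i)) →
      (∀ i, H i (Icc (0:ℝ) 1)ᶜ = 0) → ∀ z : ℝ,
        ((Measure.pi H) {y | π y ≤ z}).toReal = P (fun i => (H i (Iic z)).toReal))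
    (F : Measure ℝ) [IsProbabilityMeasure F] (hF : F (Icc (0:ℝ) 1)ᶜ = 0)
    (H : Fin n → Measure ℝ) [∀ i, IsProbabilityMeasure (H i)]
    (hH : ∀ i, H i (Icc (0:ℝ) 1)ᶜ = 0) :
    (∫ y, (∫ v, (co * max (π y - v) 0 + cu * max (v - π y) 0) ∂F) ∂(Measure.pi H))
        - sInf ((fun a => ∫ v, (co * max (a - v) 0 + cu * max (v - a) 0) ∂F)
            '' Icc (0:ℝ) 1)
      = (cu + co) * ∫ z in (0:ℝ)..1,
          ((1 - P (fun i => (H i (Iic z)).toReal)) * ((F (Iic z)).toReal - q)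
            + q * (1 - (F (Iic z)).toReal)
            - min ((1 - q) * (F (Iic z)).toReal) (q * (1 - (F (Iic z)).toReal))) := by
  classical
  set μ := Measure.pi H with hμ
  set cube : Set (Fin n → ℝ) := {y | ∀ i, y i ∈ Icc (0:ℝ) 1} with hcube
  have hcube_m : MeasurableSet cube := by
    have : cube = ⋂ i, (fun y : Fin n → ℝ => y i) ⁻¹' Icc (0:ℝ) 1 := by
      ext y; simp [hcube]
    rw [this]
    exact MeasurableSet.iInter fun i => (measurable_pi_apply i) measurableSet_Icc
  have hcubec : μ cubeᶜ = 0 := by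
    have hsub : cubeᶜ ⊆ ⋃ i, Function.eval i ⁻¹' (Icc (0:ℝ) 1)ᶜ := by
      intro y hy
      simp only [hcube, mem_compl_iff, mem_setOf_eq, not_forall] at hy
      obtain ⟨i, hi⟩ := hy
      exact mem_iUnion.mpr ⟨i, hi⟩
    exact measure_mono_null hsub
      (measure_iUnion_null fun i => Measure.pi_eval_preimage_null (μ := H) (hH i))
  have hdirac : ∀ x, x ∈ cube → ∀ z : ℝ,
      (if π x ≤ z then (1:ℝ) else 0) = P (fun i => if x i ≤ z then 1 else 0) := by
    intro x hx z
    have h2 : ∀ i, Measure.dirac (x i) (Icc (0:ℝ) 1)ᶜ = 0 := by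
      intro i
      rw [dirac_arb, if_neg (by simpa using (hx i))]
    have hs := hsep (fun i => Measure.dirac (x i)) (fun i => inferInstance) h2 z
    rw [pi_dirac', dirac_arb] at hs
    have harg : (fun i => (Measure.dirac (x i) (Iic z)).toReal)
        = fun i => if x i ≤ z then (1:ℝ) else 0 := by
      funext i
      rw [dirac_arb]
      by_cases h : x i ≤ z
      · rw [if_pos (show x i ∈ Iic z from h), if_pos h]; simp
      · rw [if_neg (show x i ∉ Iic z from h), if_neg h]; simp
    rw [harg] at hs
    rw [← hs]
    by_cases h : π x ≤ z
    · rw [if_pos h, if_pos (show x ∈ {y | π y ≤ z} from h)]; simp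
    · rw [if_neg h, if_neg (show x ∉ {y | π y ≤ z} from h)]; simp
  have hx0 : (fun _ : Fin n => (0:ℝ)) ∈ cube := fun i => ⟨le_refl 0, zero_le_one⟩
  have hP1 : P (fun _ => (1:ℝ)) = 1 := by
    have hd := hdirac _ hx0 (max 1 (π fun _ => 0))
    rw [if_pos (le_max_right _ _)] at hd
    have harg : (fun i : Fin n => if (fun _ : Fin n => (0:ℝ)) i ≤ max 1 (π fun _ => 0)
        then (1:ℝ) else 0) = fun _ => 1 := by
      funext i
      exact if_pos (le_trans zero_le_one (le_max_left _ _))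
    rw [harg] at hd
    exact hd.symm
  have hub : ∀ x ∈ cube, π x ≤ 1 := by
    intro x hx
    have hd := hdirac x hx 1
    have harg : (fun i => if x i ≤ (1:ℝ) then (1:ℝ) else 0) = fun _ => 1 :=
      funext fun i => if_pos (hx i).2
    rw [harg, hP1] at hd
    by_contra h
    rw [if_neg h] at hd
    norm_num at hd
  have hP0 : P (fun _ => (0:ℝ)) ≠ 1 := by
    intro hP0
    set z := min (-1) (π (fun _ => 0) - 1) with hz
    have hz0 : z < 0 := lt_of_le_of_lt (min_le_left _ _) (by norm_num)
    have hd := hdirac _ hx0 z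
    have harg : (fun i : Fin n => if (fun _ : Fin n => (0:ℝ)) i ≤ z then (1:ℝ) else 0)
        = fun _ => 0 := funext fun i => if_neg (not_le.mpr hz0)
    rw [harg, hP0] at hd
    by_cases h : π (fun _ => 0) ≤ z
    · have := le_trans h (min_le_right _ _)
      linarith
    · rw [if_neg h] at hd
      norm_num at hd
  have hlb : ∀ x ∈ cube, 0 ≤ π x := by
    intro x hx
    by_contra h
    push_neg at h
    have hd := hdirac x hx (π x)
    rw [if_pos le_rfl] at hd
    have harg : (fun i => if x i ≤ π x then (1:ℝ) else 0) = fun _ => 0 :=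
      funext fun i => if_neg (not_le.mpr (lt_of_lt_of_le h (hx i).1))
    rw [harg] at hd
    exact hP0 hd.symm
  set πt : (Fin n → ℝ) → ℝ := fun y => if y ∈ cube then π y else 0 with hπt
  have hπt_mem : ∀ y, πt y ∈ Icc (0:ℝ) 1 := by
    intro y
    by_cases h : y ∈ cube
    · simp only [hπt, if_pos h]
      exact ⟨hlb y h, hub y h⟩
    · simp only [hπt, if_neg h]
      exact ⟨le_refl 0, zero_le_one⟩
  have hπt_meas : Measurable πt := by
    apply measurable_of_Iic
    intro z
    set S : Set (Fin n → ℝ) := ⋃ (s : Fin n → Bool)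
        (_ : P (fun i => if s i = true then (1:ℝ) else 0) = 1),
        {y | ∀ i, (y i ≤ z ↔ s i = true)} with hS
    have hSm : MeasurableSet S := by
      refine MeasurableSet.iUnion fun s => MeasurableSet.iUnion fun _ => ?_
      have heq : {y : Fin n → ℝ | ∀ i, (y i ≤ z ↔ s i = true)}
          = ⋂ i, {y : Fin n → ℝ | y i ≤ z ↔ s i = true} := by
        ext y; simp
      rw [heq]
      refine MeasurableSet.iInter fun i => ?_
      by_cases hsi : s i = true
      · have : {y : Fin n → ℝ | y i ≤ z ↔ s i = true}
            = (fun y : Fin n → ℝ => y i) ⁻¹' Iic z := by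
          ext y; simp [hsi]
        rw [this]
        exact (measurable_pi_apply i) measurableSet_Iic
      · have : {y : Fin n → ℝ | y i ≤ z ↔ s i = true}
            = ((fun y : Fin n → ℝ => y i) ⁻¹' Iic z)ᶜ := by
          ext y; simp [hsi]
        rw [this]
        exact ((measurable_pi_apply i) measurableSet_Iic).compl
    have hSmem : ∀ y, y ∈ S ↔ P (fun i => if y i ≤ z then (1:ℝ) else 0) = 1 := by
      intro y
      constructor
      · intro hy
        simp only [hS, mem_iUnion, mem_setOf_eq] at hy
        obtain ⟨s, hPs, hy⟩ := hy
        have : (fun i => if y i ≤ z then (1:ℝ) else 0)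
            = fun i => if s i = true then 1 else 0 := by
          funext i
          by_cases h : y i ≤ z
          · rw [if_pos h, if_pos ((hy i).mp h)]
          · rw [if_neg h, if_neg (fun hs => h ((hy i).mpr hs))]
        rw [this]
        exact hPs
      · intro hPy
        simp only [hS, mem_iUnion, mem_setOf_eq]
        refine ⟨fun i => decide (y i ≤ z), ?_, fun i => by simp⟩
        have : (fun i => if (decide (y i ≤ z)) = true then (1:ℝ) else 0)
            = fun i => if y i ≤ z then 1 else 0 := by
          funext i
          by_cases h : y i ≤ z <;> simp [h]
        rw [this]
        exact hPy
    have hset : πt ⁻¹' Iic z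
        = (cube ∩ S) ∪ (cubeᶜ ∩ {y : Fin n → ℝ | (0:ℝ) ≤ z}) := by
      ext y
      simp only [mem_preimage, mem_Iic, hπt, mem_union, mem_inter_iff, mem_compl_iff,
        mem_setOf_eq]
      by_cases h : y ∈ cube
      · rw [if_pos h]
        simp only [h, true_and, not_true, false_and, or_false]
        constructor
        · intro hyz
          rw [hSmem y]
          rw [← hdirac y h z, if_pos hyz]
        · intro hyS
          have hp := (hSmem y).mp hyS
          rw [← hdirac y h z] at hp
          by_contra hc
          rw [if_neg hc] at hp
          norm_num at hp
      · rw [if_neg h]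
        simp [h]
    rw [hset]
    exact (hcube_m.inter hSm).union (hcube_m.compl.inter (MeasurableSet.const _))
  have hae : ∀ᵐ y ∂μ, π y = πt y := by
    rw [ae_iff]
    refine measure_mono_null (fun y (hy : ¬ π y = πt y) => ?_) hcubec
    intro hyc
    exact hy (by rw [hπt]; simp only [if_pos hyc])
  have hGeq : ∀ z : ℝ, μ {y | π y ≤ z} = μ {y | πt y ≤ z} := by
    intro z
    apply measure_congr
    rw [Filter.eventuallyEq_set]
    filter_upwards [hae] with y h
    simp only [mem_setOf_eq, h]
  set G : ℝ → ℝ := fun z => (μ {y | πt y ≤ z}).toReal with hG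
  have hGmono : Monotone G := by
    intro z1 z2 h
    exact ENNReal.toReal_mono (measure_ne_top μ _)
      (measure_mono fun y (hy : πt y ≤ z1) => le_trans hy h)
  have hGmeas : Measurable G := hGmono.measurable
  have hG0 : ∀ z, 0 ≤ G z := fun z => ENNReal.toReal_nonneg
  have hG1 : ∀ z, G z ≤ 1 := by
    intro z
    rw [hG]
    calc (μ {y | πt y ≤ z}).toReal ≤ (1 : ℝ≥0∞).toReal :=
        ENNReal.toReal_mono ENNReal.one_ne_top prob_le_one
      _ = 1 := ENNReal.toReal_one
  haveI : IsFiniteMeasure (volume.restrict (Ioc (0:ℝ) 1)) :=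
    ⟨by rw [Measure.restrict_apply_univ]; simp⟩
  set Fc : ℝ → ℝ := fun z => (F (Iic z)).toReal with hFc
  have hFcmono : Monotone Fc := by
    intro z1 z2 h
    exact ENNReal.toReal_mono (measure_ne_top F _) (measure_mono (Iic_subset_Iic.mpr h))
  have hFcmeas : Measurable Fc := hFcmono.measurable
  have hFc0 : ∀ z, 0 ≤ Fc z := fun z => ENNReal.toReal_nonneg
  have hFc1' : ∀ z, Fc z ≤ 1 := by
    intro z
    rw [hFc]
    calc (F (Iic z)).toReal ≤ (1 : ℝ≥0∞).toReal :=
        ENNReal.toReal_mono ENNReal.one_ne_top prob_le_one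
      _ = 1 := ENNReal.toReal_one
  have hFc1 : Fc 1 = 1 := by
    have h0 : F (Ioi 1) = 0 := by
      refine measure_mono_null (fun t (ht : (1:ℝ) < t) => ?_) hF
      intro htm
      exact absurd htm.2 (not_le.mpr ht)
    have h1 : F (Iic 1) = 1 := by
      rw [← compl_Ioi, prob_compl_eq_one_sub measurableSet_Ioi, h0, tsub_zero]
    rw [hFc]
    simp only [h1, ENNReal.toReal_one]
  -- main term
  have hT : (∫ y, (∫ v, (co * max (π y - v) 0 + cu * max (v - π y) 0) ∂F) ∂μ)
      = ∫ z in Ioc (0:ℝ) 1, ((1 - G z) * (co * Fc z) + G z * (cu * (1 - Fc z))) := by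
    have hint : Integrable
        (Function.uncurry fun (y : Fin n → ℝ) (z : ℝ) =>
          if z < πt y then co * Fc z else cu * (1 - Fc z))
        (μ.prod (volume.restrict (Ioc (0:ℝ) 1))) := by
      have hm : Measurable (Function.uncurry fun (y : Fin n → ℝ) (z : ℝ) =>
          if z < πt y then co * Fc z else cu * (1 - Fc z)) := by
        refine Measurable.ite (measurableSet_lt measurable_snd
          (hπt_meas.comp measurable_fst)) ?_ ?_
        · exact (hFcmeas.comp measurable_snd).const_mul co
        · exact (measurable_const.sub (hFcmeas.comp measurable_snd)).const_mul cu
      refine (integrable_const (co + cu)).mono' hm.aestronglyMeasurable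
        (ae_of_all _ fun p => ?_)
      simp only [Function.uncurry, Real.norm_eq_abs]
      split_ifs
      · rw [abs_of_nonneg (mul_nonneg hco.le (hFc0 _))]
        nlinarith [hFc0 p.2, hFc1' p.2]
      · rw [abs_of_nonneg (mul_nonneg hcu.le (by linarith [hFc1' p.2]))]
        nlinarith [hFc0 p.2, hFc1' p.2]
    have hinner : ∀ z : ℝ, (∫ y, (if z < πt y then co * Fc z else cu * (1 - Fc z)) ∂μ)
        = (1 - G z) * (co * Fc z) + G z * (cu * (1 - Fc z)) := by
      intro z
      have hA : MeasurableSet {y | πt y ≤ z} := hπt_meas measurableSet_Iic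
      have hfun : (fun y => if z < πt y then co * Fc z else cu * (1 - Fc z))
          = fun y => ({y | πt y ≤ z}ᶜ.indicator (fun _ => co * Fc z) y
            + {y | πt y ≤ z}.indicator (fun _ => cu * (1 - Fc z)) y) := by
        funext y
        by_cases h : πt y ≤ z
        · rw [if_neg (not_lt.mpr h),
            indicator_of_notMem (show y ∉ {y | πt y ≤ z}ᶜ from not_not_intro h),
            indicator_of_mem (show y ∈ {y | πt y ≤ z} from h)]
          ring
        · rw [if_pos (not_le.mp h),
            indicator_of_mem (show y ∈ {y | πt y ≤ z}ᶜ from h),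
            indicator_of_notMem (show y ∉ {y | πt y ≤ z} from h)]
          ring
      rw [hfun, integral_add ((integrable_const _).indicator hA.compl)
        ((integrable_const _).indicator hA),
        integral_indicator_const _ hA.compl, integral_indicator_const _ hA,
        measureReal_def, measureReal_def, prob_compl_eq_one_sub hA,
        ENNReal.toReal_sub_of_le prob_le_one ENNReal.one_ne_top, ENNReal.toReal_one,
        smul_eq_mul, smul_eq_mul]
    calc ∫ y, (∫ v, (co * max (π y - v) 0 + cu * max (v - π y) 0) ∂F) ∂μ
        = ∫ y, (∫ v, (co * max (πt y - v) 0 + cu * max (v - πt y) 0) ∂F) ∂μ := by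
          refine integral_congr_ae ?_
          filter_upwards [hae] with y h
          rw [h]
      _ = ∫ y, (∫ z in Ioc (0:ℝ) 1,
            (if z < πt y then co * Fc z else cu * (1 - Fc z))) ∂μ := by
          refine integral_congr_ae (ae_of_all _ fun y => ?_)
          exact ell_repr co cu F hF (πt y) (hπt_mem y)
      _ = ∫ z in Ioc (0:ℝ) 1,
            (∫ y, (if z < πt y then co * Fc z else cu * (1 - Fc z)) ∂μ) :=
          integral_integral_swap hint
      _ = ∫ z in Ioc (0:ℝ) 1, ((1 - G z) * (co * Fc z) + G z * (cu * (1 - Fc z))) := by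
          refine integral_congr_ae (ae_of_all _ fun z => ?_)
          exact hinner z
  set m : ℝ → ℝ := fun z => min (co * Fc z) (cu * (1 - Fc z)) with hm
  have hIm : Integrable m (volume.restrict (Ioc (0:ℝ) 1)) := by
    refine (integrable_const (co + cu)).mono'
      (((hFcmeas.const_mul co).min
        ((measurable_const.sub hFcmeas).const_mul cu)).aestronglyMeasurable)
      (ae_of_all _ fun z => ?_)
    have h0 : 0 ≤ m z := le_min (mul_nonneg hco.le (hFc0 z))
      (mul_nonneg hcu.le (by linarith [hFc1' z]))
    rw [Real.norm_eq_abs, abs_of_nonneg h0]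
    calc m z ≤ co * Fc z := min_le_left _ _
      _ ≤ co + cu := by nlinarith [hFc0 z, hFc1' z]
  have hIg : ∀ a : ℝ, Integrable (fun z => if z < a then co * Fc z else cu * (1 - Fc z))
      (volume.restrict (Ioc (0:ℝ) 1)) := by
    intro a
    refine (integrable_const (co + cu)).mono' ?_ (ae_of_all _ fun z => ?_)
    · exact (Measurable.ite (measurableSet_lt measurable_id measurable_const)
        (hFcmeas.const_mul co)
        ((measurable_const.sub hFcmeas).const_mul cu)).aestronglyMeasurable
    · rw [Real.norm_eq_abs]
      split_ifs
      · rw [abs_of_nonneg (mul_nonneg hco.le (hFc0 z))]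
        nlinarith [hFc0 z, hFc1' z]
      · rw [abs_of_nonneg (mul_nonneg hcu.le (by linarith [hFc1' z]))]
        nlinarith [hFc0 z, hFc1' z]
  have hlow : ∀ a ∈ Icc (0:ℝ) 1,
      (∫ z in Ioc (0:ℝ) 1, m z) ≤ ∫ v, (co * max (a - v) 0 + cu * max (v - a) 0) ∂F := by
    intro a ha
    rw [ell_repr co cu F hF a ha]
    refine setIntegral_mono_on hIm (hIg a) measurableSet_Ioc fun z hz => ?_
    by_cases h : z < a
    · rw [if_pos h]; exact min_le_left _ _
    · rw [if_neg h]; exact min_le_right _ _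
  set A : Set ℝ := {z | z ∈ Icc (0:ℝ) 1 ∧ cu ≤ (cu + co) * Fc z} with hA
  have h1A : (1:ℝ) ∈ A := ⟨⟨zero_le_one, le_refl 1⟩, by rw [hFc1]; linarith⟩
  have hAne : A.Nonempty := ⟨1, h1A⟩
  have hAbdd : BddBelow A := ⟨0, fun z hz => hz.1.1⟩
  have has0 : 0 ≤ sInf A := le_csInf hAne fun z hz => hz.1.1
  have has1 : sInf A ≤ 1 := csInf_le hAbdd h1A
  have hFas : cu ≤ (cu + co) * Fc (sInf A) := by
    have key : ENNReal.ofReal (cu / (cu + co)) ≤ F (Iic (sInf A)) := by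
      have hiic : (⋂ k : ℕ, Iic (sInf A + 1/((k:ℝ)+1))) = Iic (sInf A) := by
        ext t
        simp only [mem_iInter, mem_Iic]
        constructor
        · intro h
          by_contra hc
          push_neg at hc
          have hpos : 0 < t - sInf A := by linarith
          obtain ⟨k, hk⟩ := exists_nat_gt (1/(t - sInf A))
          have hk2 : 1 < ((k:ℝ)+1) * (t - sInf A) :=
            (div_lt_iff₀ hpos).mp (lt_trans hk (lt_add_one _))
          have hk3 : 1/((k:ℝ)+1) < t - sInf A := by
            rw [div_lt_iff₀ (by positivity)]
            nlinarith
          linarith [h k]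
        · intro h k
          have : 0 < 1/((k:ℝ)+1) := by positivity
          linarith
      have hseq : Filter.Tendsto (fun k : ℕ => F (Iic (sInf A + 1/((k:ℝ)+1))))
          Filter.atTop (nhds (F (Iic (sInf A)))) := by
        have ht := tendsto_measure_iInter_atTop (μ := F)
          (s := fun k : ℕ => Iic (sInf A + 1/((k:ℝ)+1)))
          (fun k => measurableSet_Iic.nullMeasurableSet)
          (fun k1 k2 hk => Iic_subset_Iic.mpr (by
            have : 1/((k2:ℝ)+1) ≤ 1/((k1:ℝ)+1) :=
              one_div_le_one_div_of_le (by positivity) (by exact_mod_cast by omega)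
            linarith))
          ⟨0, measure_ne_top F _⟩
        rw [hiic] at ht
        exact ht
      refine ge_of_tendsto hseq (Filter.Eventually.of_forall fun k => ?_)
      obtain ⟨zk, hzkA, hzklt⟩ := Real.lt_sInf_add_pos hAne
        (show (0:ℝ) < 1/((k:ℝ)+1) by positivity)
      have h1 : ENNReal.ofReal (cu/(cu+co)) ≤ F (Iic zk) := by
        rw [ENNReal.ofReal_le_iff_le_toReal (measure_ne_top F _)]
        have h2 := hzkA.2
        rw [div_le_iff₀ (by linarith : (0:ℝ) < cu+co)]
        show cu ≤ Fc zk * (cu + co)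
        linarith [h2, mul_comm (cu + co) (Fc zk)]
      exact le_trans h1 (measure_mono (Iic_subset_Iic.mpr hzklt.le))
    have h2 := ENNReal.toReal_mono (measure_ne_top F _) key
    rw [ENNReal.toReal_ofReal (by positivity)] at h2
    have h3 : cu/(cu+co) ≤ Fc (sInf A) := h2
    rw [div_le_iff₀ (by linarith : (0:ℝ) < cu+co)] at h3
    linarith [mul_comm (Fc (sInf A)) (cu + co)]
  have hstar : (∫ v, (co * max (sInf A - v) 0 + cu * max (v - sInf A) 0) ∂F)
      = ∫ z in Ioc (0:ℝ) 1, m z := by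
    rw [ell_repr co cu F hF (sInf A) ⟨has0, has1⟩]
    refine setIntegral_congr_fun measurableSet_Ioc fun z hz => ?_
    by_cases h : z < sInf A
    · rw [if_pos h]
      have hzA : z ∉ A := fun hzA => absurd (csInf_le hAbdd hzA) (not_le.mpr h)
      have hnot : ¬ cu ≤ (cu + co) * Fc z := fun hc => hzA ⟨⟨hz.1.le, hz.2⟩, hc⟩
      push_neg at hnot
      exact (min_eq_left (by nlinarith)).symm
    · rw [if_neg h]
      have hle : sInf A ≤ z := not_lt.mp h
      have hcz : cu ≤ (cu + co) * Fc z := le_trans hFas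
        (mul_le_mul_of_nonneg_left (hFcmono hle) (by linarith))
      exact (min_eq_right (by nlinarith)).symm
  have hsinf : sInf ((fun a => ∫ v, (co * max (a - v) 0 + cu * max (v - a) 0) ∂F)
        '' Icc (0:ℝ) 1)
      = ∫ z in Ioc (0:ℝ) 1, m z := by
    refine le_antisymm ?_ ?_
    · refine csInf_le ⟨∫ z in Ioc (0:ℝ) 1, m z, ?_⟩ ⟨sInf A, ⟨has0, has1⟩, hstar⟩
      rintro b ⟨a, ha, rfl⟩
      exact hlow a ha
    · refine le_csInf ⟨_, mem_image_of_mem _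
        (show (0:ℝ) ∈ Icc (0:ℝ) 1 from ⟨le_refl 0, zero_le_one⟩)⟩ ?_
      rintro b ⟨a, ha, rfl⟩
      exact hlow a ha
  have hPG : ∀ z : ℝ, P (fun i => (H i (Iic z)).toReal) = G z := by
    intro z
    rw [← hsep H (fun i => inferInstance) hH z]
    exact congrArg ENNReal.toReal (hGeq z)
  have hI1 : Integrable (fun z => (1 - G z) * (co * Fc z) + G z * (cu * (1 - Fc z)))
      (volume.restrict (Ioc (0:ℝ) 1)) := by
    refine (integrable_const (co + cu)).mono' ?_ (ae_of_all _ fun z => ?_)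
    · exact (((measurable_const.sub hGmeas).mul (hFcmeas.const_mul co)).add
        (hGmeas.mul ((measurable_const.sub hFcmeas).const_mul cu))).aestronglyMeasurable
    · have e0 : 0 ≤ (1 - G z) * (co * Fc z) + G z * (cu * (1 - Fc z)) :=
        add_nonneg (mul_nonneg (by linarith [hG1 z]) (mul_nonneg hco.le (hFc0 z)))
          (mul_nonneg (hG0 z) (mul_nonneg hcu.le (by linarith [hFc1' z])))
      have p1 : (1 - G z) * Fc z ≤ 1 :=
        mul_le_one₀ (by linarith [hG0 z]) (hFc0 z) (hFc1' z)
      have p2 : G z * (1 - Fc z) ≤ 1 :=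
        mul_le_one₀ (hG1 z) (by linarith [hFc1' z]) (by linarith [hFc0 z])
      have e1 : (1 - G z) * (co * Fc z) ≤ co := by
        have := mul_le_mul_of_nonneg_left p1 hco.le
        linarith [this]
      have e2 : G z * (cu * (1 - Fc z)) ≤ cu := by
        have := mul_le_mul_of_nonneg_left p2 hcu.le
        linarith [this]
      rw [Real.norm_eq_abs, abs_of_nonneg e0]
      linarith
  rw [hT, hsinf, intervalIntegral.integral_of_le (zero_le_one),
    ← integral_sub hI1 hIm, ← MeasureTheory.integral_const_mul]
  refine setIntegral_congr_fun measurableSet_Ioc fun z hz => ?_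
  rw [hPG z]
  exact keyalg co cu q (Fc z) (G z) hco hcu hq
end
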